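/- Let Ω₀ and Ω₀* be open subsets of ℝⁿ, let f : ℝⁿ → ℝ be such that its gradient ∇f is differentiable on Ω₀, and let g : ℝⁿ → ℝⁿ map Ω₀* into Ω₀, be differentiable at every point of Ω₀*, and satisfy ∇f(g(x*)) = x* for all x* ∈ Ω₀*. Define F(x*) = f(g(x*)) − ⟨g(x*), x*⟩. Fix x* ∈ Ω₀* and suppose the Hessian f″(g(x*)) (the derivative of ∇f at g(x*), viewed as a continuous linear map ℝⁿ → ℝⁿ) is invertible. Then ∇F is differentiable at x* and F″(x*) = −( f″(g(x*)) )⁻¹ as continuous linear maps on ℝⁿ. -/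

import Mathlib

open scoped RealInnerProductSpace

/-- Legendre transform and inverse Hessians: if the gradient `f'` of `f` exists and is
differentiable on the open set `Ω₀ ⊆ ℝⁿ`, `g` maps the open set `Ω₀*` into `Ω₀`, is
differentiable on `Ω₀*` and satisfies `∇f (g x*) = x*` there, and if the Hessian of `f`
at `g x*` (the Fréchet derivative `H` of `∇f` at `g x*`) is invertible, then the gradient
of the Legendre transform `F x* = f (g x*) - ⟪g x*, x*⟫` is differentiable at `x*` with
derivative `F'' (x*) = - H⁻¹`. -/
theorem legendre_hessian
    (n : ℕ) (Ω₀ Ω₀s : Set (EuclideanSpace ℝ (Fin n)))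
    (hΩ₀ : IsOpen Ω₀) (hΩ₀s : IsOpen Ω₀s)
    (f : EuclideanSpace ℝ (Fin n) → ℝ)
    (f' : EuclideanSpace ℝ (Fin n) → EuclideanSpace ℝ (Fin n))
    (hf : ∀ x ∈ Ω₀, HasGradientAt f (f' x) x)
    (hf'diff : ∀ x ∈ Ω₀, DifferentiableAt ℝ f' x)
    (g : EuclideanSpace ℝ (Fin n) → EuclideanSpace ℝ (Fin n))
    (hg_maps : ∀ xs ∈ Ω₀s, g xs ∈ Ω₀)
    (hg_diff : ∀ xs ∈ Ω₀s, DifferentiableAt ℝ g xs)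
    (hfg : ∀ xs ∈ Ω₀s, f' (g xs) = xs)
    (F : EuclideanSpace ℝ (Fin n) → ℝ)
    (hF : ∀ xs, F xs = f (g xs) - ⟪g xs, xs⟫)
    (xs : EuclideanSpace ℝ (Fin n)) (hxs : xs ∈ Ω₀s)
    (H : EuclideanSpace ℝ (Fin n) ≃L[ℝ] EuclideanSpace ℝ (Fin n))
    (hH : HasFDerivAt f' (H : EuclideanSpace ℝ (Fin n) →L[ℝ] EuclideanSpace ℝ (Fin n)) (g xs)) :
    HasFDerivAt (fun y => gradient F y)
      (-(H.symm : EuclideanSpace ℝ (Fin n) →L[ℝ] EuclideanSpace ℝ (Fin n))) xs := by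
  -- Step 1: gradient F y = -(g y) on Ω₀s
  have hgradF : ∀ y ∈ Ω₀s, HasGradientAt F (-(g y)) y := by
    intro y hy
    have hg' := (hg_diff y hy).hasFDerivAt
    set g' := fderiv ℝ g y
    have hfGy : HasFDerivAt f ((InnerProductSpace.toDual ℝ _ (f' (g y)) :
        EuclideanSpace ℝ (Fin n) →L[ℝ] ℝ)) (g y) :=
      (hf _ (hg_maps y hy)).hasFDerivAt
    have h1 : HasFDerivAt (fun z => f (g z))
        ((InnerProductSpace.toDual ℝ _ (f' (g y)) :
          EuclideanSpace ℝ (Fin n) →L[ℝ] ℝ).comp g') y := hfGy.comp y hg'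
    have h2 : HasFDerivAt (fun z => ⟪g z, z⟫)
        ((fderivInnerCLM ℝ (g y, y)).comp (g'.prod (ContinuousLinearMap.id ℝ _))) y :=
      hg'.inner ℝ (hasFDerivAt_id y)
    have h3 := h1.sub h2
    rw [hasGradientAt_iff_hasFDerivAt]
    have hFeq : F = fun z => f (g z) - ⟪g z, z⟫ := funext hF
    rw [hFeq]
    refine h3.congr_fderiv ?_
    ext v
    simp [fderivInnerCLM, hfg y hy, real_inner_comm, inner_neg_left]
  -- Step 2: fderiv g xs = H.symm
  have hcomp : HasFDerivAt (fun z => f' (g z))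
      ((H : EuclideanSpace ℝ (Fin n) →L[ℝ] EuclideanSpace ℝ (Fin n)).comp (fderiv ℝ g xs)) xs :=
    hH.comp xs (hg_diff xs hxs).hasFDerivAt
  have hid : HasFDerivAt (fun z => f' (g z)) (ContinuousLinearMap.id ℝ _) xs := by
    have : (fun z => f' (g z)) =ᶠ[nhds xs] id := by
      filter_upwards [hΩ₀s.mem_nhds hxs] with z hz using hfg z hz
    exact (hasFDerivAt_id xs).congr_of_eventuallyEq this
  have huniq : (H : EuclideanSpace ℝ (Fin n) →L[ℝ] EuclideanSpace ℝ (Fin n)).comp (fderiv ℝ g xs)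
      = ContinuousLinearMap.id ℝ _ := hcomp.unique hid
  have hgderiv : fderiv ℝ g xs = (H.symm : EuclideanSpace ℝ (Fin n) →L[ℝ] EuclideanSpace ℝ (Fin n)) := by
    refine ContinuousLinearMap.ext fun v => ?_
    have := congrArg (fun (L : EuclideanSpace ℝ (Fin n) →L[ℝ] EuclideanSpace ℝ (Fin n)) =>
      H.symm (L v)) huniq
    simpa using this
  -- Step 3: conclude
  have hnegg : HasFDerivAt (fun y => -(g y))
      (-(H.symm : EuclideanSpace ℝ (Fin n) →L[ℝ] EuclideanSpace ℝ (Fin n))) xs := by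
    have := (hg_diff xs hxs).hasFDerivAt
    rw [hgderiv] at this
    exact this.neg
  apply hnegg.congr_of_eventuallyEq
  filter_upwards [hΩ₀s.mem_nhds hxs] with y hy
  exact (hgradF y hy).gradient
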